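/- The l-contraction of a symmetric power of a covector against a symmetric product of vectors expands multinomially: g^{⊙l} ·_l (f_1^{⊙p_1} ⊙ ⋯ ⊙ f_N^{⊙p_N}) = Σ over multi-indices Q with |Q| = l and q_i ≤ p_i of (∏_{i=1}^N binom(p_i, q_i)) (g^{⊙l} ·_l (f_1^{⊙q_1} ⊙ ⋯ ⊙ f_N^{⊙q_N})) · f_1^{⊙(p_1−q_1)} ⊙ ⋯ ⊙ f_N^{⊙(p_N−q_N)}. -/

import Mathlib

/-!  Symmetric-algebra model: `S V = ℝ[X_1,…,X_d]`, `f^{⊙p} = (lin f)^p`, `⊙` is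
multiplication, and the `l`-contraction with `g^{⊙l}` is the operator
`(l!)⁻¹ • (Dop g)^l`, satisfying the defining formula
`(l!)⁻¹ (Dop g)^l (lin f)^k = C(k,l) ⟨g,f⟩^l (lin f)^{k-l}`. -/

noncomputable def lin {d : ℕ} (f : Fin d → ℝ) : MvPolynomial (Fin d) ℝ :=
  ∑ x, MvPolynomial.C (f x) * MvPolynomial.X x

noncomputable def Dop {d : ℕ} (g : Fin d → ℝ) :
    Module.End ℝ (MvPolynomial (Fin d) ℝ) :=
  ∑ x, g x • (MvPolynomial.pderiv x).toLinearMap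

open MvPolynomial Finset

lemma Dop_apply {d : ℕ} (g : Fin d → ℝ) (φ : MvPolynomial (Fin d) ℝ) :
    Dop g φ = ∑ x, g x • pderiv x φ := by
  simp [Dop, LinearMap.sum_apply]

lemma Dop_mul {d : ℕ} (g : Fin d → ℝ) (a b : MvPolynomial (Fin d) ℝ) :
    Dop g (a * b) = Dop g a * b + a * Dop g b := by
  simp only [Dop_apply, pderiv_mul]
  rw [Finset.sum_mul, Finset.mul_sum, ← Finset.sum_add_distrib]
  refine Finset.sum_congr rfl fun x _ => ?_
  rw [smul_add, smul_mul_assoc, mul_smul_comm]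

lemma Dop_lin {d : ℕ} (g f : Fin d → ℝ) :
    Dop g (lin f) = C (∑ x, g x * f x) := by
  simp [Dop_apply, lin, pderiv_X, Pi.single_apply, smul_eq_C_mul]

lemma Dop_one {d : ℕ} (g : Fin d → ℝ) : Dop g 1 = 0 := by
  simp [Dop_apply]

lemma Dop_C_mul {d : ℕ} (g : Fin d → ℝ) (r : ℝ) (ψ : MvPolynomial (Fin d) ℝ) :
    Dop g (C r * ψ) = C r * Dop g ψ := by
  rw [Dop_mul]
  have : Dop g (C r) = 0 := by simp [Dop_apply]
  simp [this]

lemma Dop_lin_pow {d : ℕ} (g f : Fin d → ℝ) (k : ℕ) :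
    Dop g (lin f ^ k) = (k : ℝ) • (C (∑ x, g x * f x) * lin f ^ (k - 1)) := by
  induction k with
  | zero => simpa using Dop_one g
  | succ k ih =>
    rw [pow_succ, Dop_mul, ih, Dop_lin]
    rcases Nat.eq_zero_or_pos k with hk | hk
    · subst hk; simp [mul_comm]
    · have h1 : k - 1 + 1 = k := Nat.succ_pred_eq_of_pos hk
      rw [Nat.add_sub_cancel]
      push_cast [smul_eq_C_mul]
      rw [← h1]
      push_cast
      simp only [map_add, map_one, map_ofNat]
      ring

lemma Dop_pow_lin {d : ℕ} (g f : Fin d → ℝ) (m p : ℕ) :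
    ((Dop g) ^ m) (lin f ^ p)
      = (p.descFactorial m : ℝ) • (C (∑ x, g x * f x) ^ m * lin f ^ (p - m)) := by
  induction m with
  | zero => simp
  | succ m ih =>
    rw [pow_succ', Module.End.mul_apply, ih, map_smul, ← C_pow, Dop_C_mul, C_pow,
        Dop_lin_pow, Nat.sub_sub, Nat.descFactorial_succ]
    rw [mul_smul_comm, smul_smul]
    push_cast
    rw [mul_comm ((p.descFactorial m : ℝ))]
    congr 1
    ring

lemma Dop_pow_mul {d : ℕ} (g : Fin d → ℝ) (l : ℕ) (a b : MvPolynomial (Fin d) ℝ) :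
    ((Dop g) ^ l) (a * b)
      = ∑ j ∈ range (l + 1),
          (l.choose j : ℝ) • (((Dop g) ^ j) a * ((Dop g) ^ (l - j)) b) := by
  induction l generalizing a b with
  | zero => simp
  | succ l ih =>
    rw [pow_succ, Module.End.mul_apply, Dop_mul, map_add, ih, ih]
    have e1 : ∀ j, ((Dop g) ^ j) (Dop g a) = ((Dop g) ^ (j + 1)) a := by
      intro j; rw [pow_succ, Module.End.mul_apply]
    have e2 : ∀ j, ((Dop g) ^ j) (Dop g b) = ((Dop g) ^ (j + 1)) b := by
      intro j; rw [pow_succ, Module.End.mul_apply]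
    simp only [e1, e2]
    rw [Finset.sum_range_succ' (fun j => ((l+1).choose j : ℝ) •
        (((Dop g) ^ j) a * ((Dop g) ^ (l + 1 - j)) b)) (l+1)]
    rw [Finset.sum_range_succ (fun j => ((l+1).choose (j+1) : ℝ) •
        (((Dop g) ^ (j+1)) a * ((Dop g) ^ (l + 1 - (j+1))) b)) l]
    rw [Finset.sum_range_succ (fun j => ((l).choose j : ℝ) •
        (((Dop g) ^ (j+1)) a * ((Dop g) ^ (l - j)) b)) l]
    rw [Finset.sum_range_succ' (fun j => ((l).choose j : ℝ) •
        (((Dop g) ^ j) a * ((Dop g) ^ (l - j + 1)) b)) l]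
    have hA : (∑ j ∈ range l, ((l).choose j : ℝ) •
          (((Dop g) ^ (j+1)) a * ((Dop g) ^ (l - j)) b))
        + (∑ j ∈ range l, ((l).choose (j+1) : ℝ) •
          (((Dop g) ^ (j+1)) a * ((Dop g) ^ (l - (j+1) + 1)) b))
        = ∑ j ∈ range l, ((l+1).choose (j+1) : ℝ) •
          (((Dop g) ^ (j+1)) a * ((Dop g) ^ (l + 1 - (j+1))) b) := by
      rw [← Finset.sum_add_distrib]
      refine Finset.sum_congr rfl fun j hj => ?_
      have hj' := Finset.mem_range.mp hj
      have h1 : l - (j+1) + 1 = l - j := by omega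
      have h2 : l + 1 - (j+1) = l - j := by omega
      rw [h1, h2, Nat.choose_succ_succ]
      push_cast
      rw [add_smul]
    have hb : ((l).choose l : ℝ) • (((Dop g) ^ (l+1)) a * ((Dop g) ^ (l - l)) b)
        = ((l+1).choose (l+1) : ℝ) • (((Dop g) ^ (l+1)) a * ((Dop g) ^ (l + 1 - (l+1))) b) := by
      simp
    have hc : ((l).choose 0 : ℝ) • (((Dop g) ^ 0) a * ((Dop g) ^ (l - 0 + 1)) b)
        = ((l+1).choose 0 : ℝ) • (((Dop g) ^ 0) a * ((Dop g) ^ (l + 1 - 0)) b) := by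
      simp
    rw [← hA, ← hb, ← hc]
    abel

lemma main_exp {d : ℕ} (g : Fin d → ℝ) : ∀ {N : ℕ} (f : Fin N → Fin d → ℝ)
    (p : Fin N → ℕ) (l : ℕ),
    ((Dop g) ^ l) (∏ i, lin (f i) ^ p i)
      = (l.factorial : ℝ) • ∑ q : (∀ i, Fin (p i + 1)),
          if (∑ i, ((q i : ℕ))) = l then
            (∏ i, (((p i).choose ((q i : ℕ))) : ℝ) * (∑ x, g x * f i x) ^ ((q i : ℕ))) •
              ∏ i, lin (f i) ^ (p i - (q i : ℕ))
          else 0 := by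
  intro N
  induction N with
  | zero =>
    intro f p l
    have h1 : (∏ i, lin (f i) ^ p i) = 1 := by simp
    have h2 : (∏ i, lin (f i) ^ p i) = lin (0 : Fin d → ℝ) ^ 0 := by simp [h1]
    rw [h2, Dop_pow_lin]
    rcases Nat.eq_zero_or_pos l with hl | hl
    · subst hl; simp
    · rw [Nat.descFactorial_eq_zero_iff_lt.mpr (by omega : (0:ℕ) < l)]
      have : ∀ q : (∀ i : Fin 0, Fin (p i + 1)), (∑ i, ((q i : ℕ))) ≠ l := by
        intro q; simp; omega
      simp [this]
      intro h; exact absurd h (by omega)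
  | succ N ih =>
    intro f p l
    set c : Fin (N+1) → ℝ := fun i => ∑ x, g x * f i x with hc
    set B : ℕ → MvPolynomial (Fin d) ℝ := fun t =>
      (l.factorial : ℝ) • ∑ q' : (∀ i : Fin N, Fin (p i.succ + 1)),
        if t + ∑ i, ((q' i : ℕ)) = l then
          ((((p 0).choose t : ℝ) * (c 0) ^ t) *
            ∏ i, (((p i.succ).choose ((q' i : ℕ))) : ℝ) * (c i.succ) ^ ((q' i : ℕ))) •
            (lin (f 0) ^ (p 0 - t) * ∏ i, lin (f i.succ) ^ (p i.succ - (q' i : ℕ)))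
        else 0 with hB
    have hBlarge : ∀ t, l < t → B t = 0 := by
      intro t ht
      rw [hB]
      beta_reduce
      rw [Finset.sum_eq_zero, smul_zero]
      intro q' _
      rw [if_neg (by omega)]
    have hBchoose : ∀ t, p 0 < t → B t = 0 := by
      intro t ht
      rw [hB]
      beta_reduce
      rw [Finset.sum_eq_zero, smul_zero]
      intro q' _
      rw [Nat.choose_eq_zero_of_lt ht]
      split <;> simp
    have lhs_eq : ((Dop g) ^ l) (∏ i, lin (f i) ^ p i) = ∑ j ∈ Finset.range (l+1), B j := by
      rw [Fin.prod_univ_succ, Dop_pow_mul]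
      refine Finset.sum_congr rfl fun j hj => ?_
      have hj' : j ≤ l := by simpa using Nat.lt_succ_iff.mp (Finset.mem_range.mp hj)
      rw [Dop_pow_lin, ih]
      have hcoef : (l.choose j * ((p 0).descFactorial j) * (l-j).factorial : ℕ)
          = l.factorial * (p 0).choose j := by
        rw [Nat.descFactorial_eq_factorial_mul_choose]
        calc l.choose j * (j.factorial * (p 0).choose j) * (l-j).factorial
            = (l.choose j * j.factorial * (l-j).factorial) * (p 0).choose j := by ring
          _ = l.factorial * (p 0).choose j := by
              rw [Nat.choose_mul_factorial_mul_factorial hj']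
      rw [hB]
      beta_reduce
      rw [smul_mul_smul_comm, smul_smul, Finset.mul_sum, Finset.smul_sum, Finset.smul_sum]
      refine Finset.sum_congr rfl fun q' _ => ?_
      have hcond : ((∑ i, ((q' i : ℕ))) = l - j) ↔ (j + ∑ i, ((q' i : ℕ)) = l) := by omega
      by_cases hP : (∑ i, ((q' i : ℕ))) = l - j
      · rw [if_pos hP, if_pos (hcond.mp hP)]
        rw [← C_pow, ← smul_eq_C_mul, smul_mul_assoc, mul_smul_comm]
        rw [smul_smul, smul_smul, smul_smul]
        congr 1
        have hreal : ((l.choose j : ℝ)) * ((p 0).descFactorial j : ℝ) * ((l-j).factorial : ℝ)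
            = (l.factorial : ℝ) * ((p 0).choose j : ℝ) := by exact_mod_cast hcoef
        simp only [hc]
        linear_combination hreal * ((∑ x, g x * f 0 x) ^ j *
          ∏ i, (((p i.succ).choose ((q' i : ℕ))) : ℝ) * (∑ x, g x * f i.succ x) ^ ((q' i : ℕ)))
      · rw [if_neg hP, if_neg (fun h => hP (hcond.mpr h))]
        simp
    have rhs_eq : ((l.factorial : ℝ) • ∑ q : (∀ i : Fin (N+1), Fin (p i + 1)),
          if (∑ i, ((q i : ℕ))) = l then
            (∏ i, (((p i).choose ((q i : ℕ))) : ℝ) * (c i) ^ ((q i : ℕ))) •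
              ∏ i, lin (f i) ^ (p i - (q i : ℕ))
          else 0)
        = ∑ t ∈ Finset.range (p 0 + 1), B t := by
      rw [show (∑ q : (∀ i : Fin (N+1), Fin (p i + 1)),
          if (∑ i, ((q i : ℕ))) = l then
            (∏ i, (((p i).choose ((q i : ℕ))) : ℝ) * (c i) ^ ((q i : ℕ))) •
              ∏ i, lin (f i) ^ (p i - (q i : ℕ))
          else 0)
        = ∑ z : Fin (p 0 + 1) × (∀ i : Fin N, Fin (p i.succ + 1)),
            (if (∑ i, (((Fin.cons z.1 z.2 : ∀ i : Fin (N+1), Fin (p i + 1)) i : ℕ))) = l then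
              (∏ i, (((p i).choose (((Fin.cons z.1 z.2 : ∀ i : Fin (N+1), Fin (p i + 1)) i : ℕ))) : ℝ)
                  * (c i) ^ (((Fin.cons z.1 z.2 : ∀ i : Fin (N+1), Fin (p i + 1)) i : ℕ))) •
                ∏ i, lin (f i) ^ (p i - ((Fin.cons z.1 z.2 : ∀ i : Fin (N+1), Fin (p i + 1)) i : ℕ))
            else 0) from
        (Fintype.sum_equiv (Fin.consEquiv (fun i => Fin (p i + 1))) _ _ (fun z => rfl)).symm]
      rw [Fintype.sum_prod_type, Finset.smul_sum, ← Fin.sum_univ_eq_sum_range (fun t => B t) (p 0 + 1)]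
      refine Finset.sum_congr rfl fun q0 _ => ?_
      rw [hB]
      beta_reduce
      refine congrArg _ (Finset.sum_congr rfl fun q' _ => ?_)
      simp only [Fin.sum_univ_succ, Fin.prod_univ_succ, Fin.cons_zero, Fin.cons_succ]
    rw [lhs_eq, rhs_eq]
    have h1 : ∑ j ∈ Finset.range (l+1), B j = ∑ j ∈ Finset.range (max l (p 0) + 1), B j :=
      Finset.sum_subset (Finset.range_subset_range.mpr (by omega))
        (fun x _ hx => hBlarge x (by simp only [Finset.mem_range] at hx; omega))
    have h2 : ∑ j ∈ Finset.range (p 0 + 1), B j = ∑ j ∈ Finset.range (max l (p 0) + 1), B j :=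
      Finset.sum_subset (Finset.range_subset_range.mpr (by omega))
        (fun x _ hx => hBchoose x (by simp only [Finset.mem_range] at hx; omega))
    rw [h1, h2]

lemma diag_sum {N : ℕ} {M : Type*} [AddCommMonoid M] (n : Fin N → ℕ)
    (F : (∀ i, Fin (n i + 1)) → M) :
    (∑ q' : (∀ i, Fin (n i + 1)), if (∑ i, ((q' i : ℕ))) = ∑ i, n i then F q' else 0)
      = F (fun i => Fin.last (n i)) := by
  rw [Finset.sum_eq_single_of_mem (fun i => Fin.last (n i)) (Finset.mem_univ _)]
  · rw [if_pos (by simp [Fin.val_last])]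
  · intro b _ hb
    rw [if_neg]
    intro hsum
    apply hb
    funext i
    have hle : ∀ i ∈ Finset.univ, ((b i : ℕ)) ≤ n i := fun i _ => Fin.is_le (b i)
    have := (Finset.sum_eq_sum_iff_of_le hle).mp hsum i (Finset.mem_univ i)
    exact Fin.ext (by simpa [Fin.val_last] using this)

/-- Multinomial expansion of the `l`-contraction of `g^{⊙l}` against a
symmetric product of vector powers; the sum is over multi-indices `Q` with `|Q| = l`
and `q_i ≤ p_i` (encoded as `q : ∀ i, Fin (p i + 1)` with `∑ i, q i = l`). -/
theorem stmt3 {d N : ℕ} (g : Fin d → ℝ) (f : Fin N → Fin d → ℝ)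
    (p : Fin N → ℕ) (l : ℕ) (hl : l ≤ ∑ i, p i) :
    (((l.factorial : ℝ)⁻¹) • (Dop g) ^ l) (∏ i, (lin (f i)) ^ (p i))
      = ∑ q : (∀ i, Fin (p i + 1)),
          if (∑ i, ((q i : ℕ))) = l then
            (∏ i, (((p i).choose ((q i : ℕ))) : ℝ)) •
              ((((l.factorial : ℝ)⁻¹) • (Dop g) ^ l) (∏ i, (lin (f i)) ^ ((q i : ℕ))) *
                ∏ i, (lin (f i)) ^ (p i - (q i : ℕ)))
          else 0 := by
  have hfac : ((l.factorial : ℝ))⁻¹ * (l.factorial : ℝ) = 1 :=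
    inv_mul_cancel₀ (by exact_mod_cast l.factorial_ne_zero)
  rw [LinearMap.smul_apply, main_exp, smul_smul, hfac, one_smul]
  refine Finset.sum_congr rfl fun q _ => ?_
  by_cases h : (∑ i, ((q i : ℕ))) = l
  · rw [if_pos h, if_pos h]
    have hinner : (((l.factorial : ℝ)⁻¹) • (Dop g) ^ l) (∏ i, (lin (f i)) ^ ((q i : ℕ)))
        = (∏ i, (∑ x, g x * f i x) ^ ((q i : ℕ))) • (1 : MvPolynomial (Fin d) ℝ) := by
      rw [LinearMap.smul_apply, main_exp, smul_smul, hfac, one_smul, ← h,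
        diag_sum (fun i => (q i : ℕ))]
      simp [Fin.val_last]
    rw [hinner, smul_mul_assoc, one_mul, smul_smul, ← Finset.prod_mul_distrib]
  · rw [if_neg h, if_neg h]
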